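/- Suppose 0 < h < 1/4 and let x₂ = (1 + √(1 − 4h))/2. Then the Fréchet derivative of F at E₂ = (x₂, 0) is the linear map given by the matrix [[1 − 2x₂, −q·x₂], [0, −s·m]], and both eigenvalues 1 − 2x₂ and −s·m of this matrix are strictly negative. -/

import Mathlib

/-- The predator–prey vector field
    `F(x,y) = (x(1-x) - q x y - h, s y (1 - y/x)(y - m))`. -/
noncomputable def F (q s h m : ℝ) (p : ℝ × ℝ) : ℝ × ℝ :=
  (p.1 * (1 - p.1) - q * p.1 * p.2 - h, s * p.2 * (1 - p.2 / p.1) * (p.2 - m))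

/-- The continuous linear map `ℝ² → ℝ²` with matrix `[[a, b], [c, d]]`. -/
noncomputable def clm (a b c d : ℝ) : (ℝ × ℝ) →L[ℝ] (ℝ × ℝ) :=
  (a • ContinuousLinearMap.fst ℝ ℝ ℝ + b • ContinuousLinearMap.snd ℝ ℝ ℝ).prod
    (c • ContinuousLinearMap.fst ℝ ℝ ℝ + d • ContinuousLinearMap.snd ℝ ℝ ℝ)

lemma diag_mem_spectrum (a b d : ℝ) :
    a ∈ spectrum ℝ (!![a, b; 0, d] : Matrix (Fin 2) (Fin 2) ℝ) := by
  rw [spectrum.mem_iff]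
  intro hu
  rw [Matrix.isUnit_iff_isUnit_det] at hu
  simp [Matrix.det_fin_two, Matrix.algebraMap_matrix_apply] at hu

lemma diag_mem_spectrum' (a b d : ℝ) :
    d ∈ spectrum ℝ (!![a, b; 0, d] : Matrix (Fin 2) (Fin 2) ℝ) := by
  rw [spectrum.mem_iff]
  intro hu
  rw [Matrix.isUnit_iff_isUnit_det] at hu
  simp [Matrix.det_fin_two, Matrix.algebraMap_matrix_apply] at hu

/-- If `0 < h < 1/4` and `x₂ = (1 + √(1-4h))/2`, the Fréchet derivative of `F` at
`E₂ = (x₂, 0)` is the linear map with matrix `[[1 - 2x₂, -q x₂], [0, -s m]]`, and both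
eigenvalues `1 - 2x₂` and `-s m` of this matrix are strictly negative. -/
theorem stmt6 (q s h m x2 : ℝ) (hq : 0 < q) (hs : 0 < s) (hh : 0 < h)
    (hm0 : 0 < m) (hm1 : m < 1) (hh4 : h < 1/4)
    (hx2 : x2 = (1 + Real.sqrt (1 - 4*h))/2) :
    HasFDerivAt (F q s h m) (clm (1 - 2*x2) (-q*x2) 0 (-s*m)) ((x2, 0) : ℝ × ℝ) ∧
    (1 - 2*x2) ∈ spectrum ℝ (!![1 - 2*x2, -q*x2; 0, -s*m] : Matrix (Fin 2) (Fin 2) ℝ) ∧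
    (-s*m) ∈ spectrum ℝ (!![1 - 2*x2, -q*x2; 0, -s*m] : Matrix (Fin 2) (Fin 2) ℝ) ∧
    1 - 2*x2 < 0 ∧ -s*m < 0 := by
  have hsq : 0 < 1 - 4*h := by linarith
  have hsqrt : 0 < Real.sqrt (1 - 4*h) := Real.sqrt_pos.mpr hsq
  have hx2pos : 0 < x2 := by rw [hx2]; positivity
  have hne : x2 ≠ 0 := ne_of_gt hx2pos
  refine ⟨?_, diag_mem_spectrum _ _ _, diag_mem_spectrum' _ _ _, ?_, ?_⟩
  · have hf : HasFDerivAt (fun p : ℝ × ℝ => p.1) (ContinuousLinearMap.fst ℝ ℝ ℝ)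
        ((x2, 0) : ℝ × ℝ) := hasFDerivAt_fst
    have hg : HasFDerivAt (fun p : ℝ × ℝ => p.2) (ContinuousLinearMap.snd ℝ ℝ ℝ)
        ((x2, 0) : ℝ × ℝ) := hasFDerivAt_snd
    have h1 := (((hf.mul
        ((hasFDerivAt_const (1 : ℝ) ((x2, 0) : ℝ × ℝ)).sub hf)).sub
        ((hf.const_mul q).mul hg))).sub_const h
    have hinv : HasFDerivAt (fun p : ℝ × ℝ => (p.1)⁻¹)
        ((-(ContinuousLinearMap.mulLeftRight ℝ ℝ x2⁻¹ x2⁻¹)).comp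
          (ContinuousLinearMap.fst ℝ ℝ ℝ)) ((x2, 0) : ℝ × ℝ) :=
      (hasFDerivAt_inv' hne).comp _ hf
    have hdiv := hg.mul hinv
    have h2 := ((hg.const_mul s).mul
        ((hasFDerivAt_const (1 : ℝ) ((x2, 0) : ℝ × ℝ)).sub hdiv)).mul
        (hg.sub_const m)
    have hfun : F q s h m = fun p : ℝ × ℝ =>
        (p.1 * (1 - p.1) - q * p.1 * p.2 - h,
          s * p.2 * (1 - p.2 * (p.1)⁻¹) * (p.2 - m)) := by
      funext p; simp [F, div_eq_mul_inv]
    rw [hfun]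
    refine (HasFDerivAt.prodMk h1 h2).congr_fderiv ?_
    refine ContinuousLinearMap.ext fun v => Prod.ext ?_ ?_ <;>
      · simp only [clm, ContinuousLinearMap.prod_apply, ContinuousLinearMap.add_apply,
          ContinuousLinearMap.sub_apply, ContinuousLinearMap.smul_apply,
          ContinuousLinearMap.coe_fst', ContinuousLinearMap.coe_snd',
          ContinuousLinearMap.comp_apply, ContinuousLinearMap.neg_apply,
          ContinuousLinearMap.mulLeftRight_apply, ContinuousLinearMap.zero_apply,
          smul_eq_mul, Pi.mul_apply, Pi.sub_apply]
        ring
  · have h14 : x2 = (1 + Real.sqrt (1 - 4*h))/2 := hx2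
    nlinarith
  · nlinarith
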